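/- Let G be a divisible nilpotent group. Then its center Z(G) is divisible: for every z ∈ Z(G) and every positive integer n there exists w ∈ Z(G) with w^n = z. -/

import Mathlib

private lemma conj_pow_central' {Q : Type*} [Group Q] {w h c : Q}
    (hc : ∀ x : Q, c * x = x * c) (h1 : w * h * w⁻¹ = c * h) (n : ℕ) :
    w ^ n * h * (w ^ n)⁻¹ = c ^ n * h := by
  induction n with
  | zero => simp
  | succ k ih =>
    have hck : c ^ k * w = w * c ^ k := Commute.pow_left (hc w) k
    have hwc : w * c ^ k * w⁻¹ = c ^ k := by rw [← hck]; group
    calc w ^ (k+1) * h * (w ^ (k+1))⁻¹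
        = w * (w ^ k * h * (w ^ k)⁻¹) * w⁻¹ := by rw [pow_succ']; group
      _ = w * (c ^ k * h) * w⁻¹ := by rw [ih]
      _ = (w * c ^ k * w⁻¹) * (w * h * w⁻¹) := by group
      _ = c ^ k * (c * h) := by rw [hwc, h1]
      _ = c ^ (k+1) * h := by rw [pow_succ]; group

private lemma step_down {G : Type*} [Group G]
    (hdiv : ∀ g : G, ∀ n : ℕ, 0 < n → ∃ h : G, h ^ n = g)
    {z w : G} {n : ℕ} (hn : 0 < n) (hz : z ∈ Subgroup.center G) (hw : w ^ n = z)
    (j : ℕ) (hmem : w ∈ Subgroup.upperCentralSeries G (j + 2)) :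
    w ∈ Subgroup.upperCentralSeries G (j + 1) := by
  rw [mem_upperCentralSeries_succ_iff] at hmem ⊢
  intro y
  obtain ⟨h, rfl⟩ := hdiv y n hn
  set N := Subgroup.upperCentralSeries G j with hN
  let π : G →* G ⧸ N := QuotientGroup.mk' N
  have hker : ∀ x : G, π x = 1 ↔ x ∈ N := fun x => QuotientGroup.eq_one_iff x
  -- c := [w, h] is central mod N
  set c : G := w * h * w⁻¹ * h⁻¹ with hcdef
  have hcmem : c ∈ Subgroup.upperCentralSeries G (j + 1) := hmem h
  rw [mem_upperCentralSeries_succ_iff] at hcmem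
  have hccentral : ∀ x : G ⧸ N, π c * x = x * π c := by
    intro x
    induction x using QuotientGroup.induction_on with
    | H a =>
      have e : π (c * a * c⁻¹ * a⁻¹) = 1 := (hker _).mpr (hcmem a)
      have e2 : π c * π a * (π c)⁻¹ * (π a)⁻¹ = 1 := by simpa [map_mul] using e
      have e3 : π c * π a = (π c * π a * (π c)⁻¹ * (π a)⁻¹) * (π a * π c) := by group
      show π c * π a = π a * π c
      rw [e3, e2, one_mul]
  have h1 : π w * π h * (π w)⁻¹ = π c * π h := by
    simp only [hcdef, map_mul, map_inv]; group
  have key := conj_pow_central' hccentral h1 n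
  have hzh : z * h * z⁻¹ = h := by
    rw [show z * h = h * z from (Subgroup.mem_center_iff.mp hz h).symm]; group
  have hzc : π w ^ n * π h * (π w ^ n)⁻¹ = π h := by
    rw [← map_pow, hw, ← map_inv, ← map_mul, ← map_mul, hzh]
  have hcn : (π c) ^ n = 1 := mul_eq_right.mp (hzc.symm.trans key).symm
  -- now show [w, h^n] ∈ N
  rw [← hker]
  have expand : π (w * h ^ n * w⁻¹ * (h ^ n)⁻¹)
      = (π w * π h * (π w)⁻¹) ^ n * ((π h) ^ n)⁻¹ := by
    simp only [map_mul, map_inv, map_pow]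
    rw [conj_pow]
  have hcomm : Commute (π c) (π h) := hccentral (π h)
  rw [commutatorElement_def, expand, h1, hcomm.mul_pow, hcn, one_mul, mul_inv_cancel]

/-- The center of a divisible nilpotent group is divisible. -/
theorem center_of_divisible_nilpotent_is_divisible
    {G : Type*} [Group G] [Group.IsNilpotent G]
    (hdiv : ∀ g : G, ∀ n : ℕ, 0 < n → ∃ h : G, h ^ n = g) :
    ∀ z ∈ Subgroup.center G, ∀ n : ℕ, 0 < n →
      ∃ w ∈ Subgroup.center G, w ^ n = z := by
  intro z hz n hn
  obtain ⟨w, hw⟩ := hdiv z n hn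
  obtain ⟨c, hc⟩ := Group.IsNilpotent.nilpotent' (G := G)
  have hwmem : w ∈ Subgroup.upperCentralSeries G c := hc ▸ Subgroup.mem_top w
  have main : ∀ k : ℕ, w ∈ Subgroup.upperCentralSeries G k → w ∈ Subgroup.center G := by
    intro k
    induction k with
    | zero =>
      intro hk
      rw [upperCentralSeries_zero] at hk
      simp only [Subgroup.mem_bot] at hk
      rw [hk]; exact Subgroup.one_mem _
    | succ m ih =>
      intro hk
      match m, ih with
      | 0, _ => rwa [upperCentralSeries_one] at hk
      | (j+1), ih => exact ih (step_down hdiv hn hz hw j hk)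
  exact ⟨w, main c hwmem, hw⟩
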